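/- Let (Xₙ) be a Markov chain and w : E → [0,∞) bounded measurable, λ^γ ∈ ℝ, γ > 0, satisfying e^{γ c(x,a)} ≤ e^{w(x) + γλ^γ} / E[e^{w(X_{i+1})} | F_i, X_i = x, a_i = a] for all x, a. Let φ : ℕ → (0,1] be nonincreasing. Then E_{k,x}[exp(γ Σ_{i=k}^{n+k-1} φ(i) c(X_{i-k}, a_{i-k}))] ≤ exp(γ λ^γ Σ_{i=k}^{n+k-1} φ(i)) · exp(φ(k) w(x)) · exp(‖w‖·(φ(k) − φ(n+k−1))). -/

import Mathlib

open MeasureTheory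

lemma rpow_tangent {p y s : ℝ} (hp0 : 0 < p) (hp1 : p ≤ 1) (hy : 0 ≤ y) (hs : 0 < s) :
    y ^ p ≤ p * s ^ (p - 1) * y + (1 - p) * s ^ p := by
  have hamgm := Real.geom_mean_le_arith_mean2_weighted hp0.le (by linarith : (0:ℝ) ≤ 1 - p)
    hy hs.le (by ring)
  have hmul := mul_le_mul_of_nonneg_right hamgm (le_of_lt (Real.rpow_pos_of_pos hs (p - 1)))
  calc y ^ p = y ^ p * s ^ (1 - p) * s ^ (p - 1) := by
        rw [mul_assoc, ← Real.rpow_add hs]; norm_num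
    _ ≤ (p * y + (1 - p) * s) * s ^ (p - 1) := hmul
    _ = p * s ^ (p - 1) * y + (1 - p) * (s ^ (p - 1) * s) := by ring
    _ = p * s ^ (p - 1) * y + (1 - p) * s ^ p := by
        rw [← Real.rpow_add_one hs.ne' (p - 1)]; norm_num

lemma exp_rpow' (x y : ℝ) : Real.exp x ^ y = Real.exp (y * x) := by
  rw [Real.rpow_def_of_pos (Real.exp_pos x), Real.log_exp, mul_comm]

theorem risk_sensitive_discounted_bound
    {Ω E U : Type*} {m0 : MeasurableSpace Ω} [MeasurableSpace E]
    (μ : Measure Ω) [IsProbabilityMeasure μ]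
    (ℱ : Filtration ℕ m0)
    (X : ℕ → Ω → E) (hX : ∀ i, Measurable[ℱ i] (X i))
    (a : ℕ → Ω → U)
    (c : E → U → ℝ) (Cc : ℝ) (hcb : ∀ y u, |c y u| ≤ Cc)
    (w : E → ℝ) (hwm : Measurable w)
    (hw0 : ∀ y, 0 ≤ w y) (W : ℝ) (hwb : ∀ y, w y ≤ W)
    (γ lam : ℝ) (hγ : 0 < γ)
    (x : E) (hstart : ∀ᵐ ω ∂μ, X 0 ω = x)
    (hsub : ∀ i, ∀ᵐ ω ∂μ,
      Real.exp (γ * c (X i ω) (a i ω))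
        ≤ Real.exp (w (X i ω) + γ * lam)
            / (μ[(fun ω' => Real.exp (w (X (i + 1) ω'))) | ℱ i]) ω)
    (φ : ℕ → ℝ) (hφpos : ∀ i, 0 < φ i) (hφle : ∀ i, φ i ≤ 1)
    (hφmono : ∀ i j, i ≤ j → φ j ≤ φ i)
    (k n : ℕ) (hn : 1 ≤ n) :
    ∫ ω, Real.exp (γ * ∑ i ∈ Finset.Ico k (n + k),
        φ i * c (X (i - k) ω) (a (i - k) ω)) ∂μ
      ≤ Real.exp (γ * lam * ∑ i ∈ Finset.Ico k (n + k), φ i)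
          * Real.exp (φ k * w x)
          * Real.exp (W * (φ k - φ (n + k - 1))) := by
  -- notation
  set ψ : ℕ → ℝ := fun j => φ (k + j) with hψ
  have hψ0 : ∀ j, 0 < ψ j := fun j => hφpos _
  have hψ1 : ∀ j, ψ j ≤ 1 := fun j => hφle _
  have hψmono : ∀ i j, i ≤ j → ψ j ≤ ψ i := fun i j hij =>
    hφmono _ _ (by omega)
  have hW0 : 0 ≤ W := le_trans (hw0 x) (hwb x)
  set T : ℕ → Ω → ℝ := fun j => μ[(fun ω' => Real.exp (w (X (j + 1) ω'))) | ℱ j] with hT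
  -- basic measurability
  have hXm : ∀ i, Measurable (X i) := fun i => (hX i).mono (ℱ.le i) le_rfl
  have hewm : ∀ i, Measurable (fun ω => Real.exp (w (X i ω))) := fun i =>
    Real.measurable_exp.comp (hwm.comp (hXm i))
  have hprob : ∀ (f : Ω → ℝ) (C : ℝ), AEStronglyMeasurable f μ →
      (∀ᵐ ω ∂μ, |f ω| ≤ C) → Integrable f μ := fun f C hf hb =>
    ⟨hf, HasFiniteIntegral.of_bounded (C := C) (by simpa [Real.norm_eq_abs] using hb)⟩
  have hewint : ∀ i, Integrable (fun ω => Real.exp (w (X i ω))) μ := by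
    intro i
    refine hprob _ (Real.exp W) (hewm i).aestronglyMeasurable (ae_of_all _ fun ω => ?_)
    rw [abs_of_nonneg (Real.exp_pos _).le]
    exact Real.exp_le_exp.2 (hwb _)
  have hTsm : ∀ j, StronglyMeasurable[ℱ j] (T j) := fun j => stronglyMeasurable_condExp
  have hTm : ∀ j, Measurable[ℱ j] (T j) := fun j => (hTsm j).measurable
  -- a.e. bounds on T
  have hT1 : ∀ j, ∀ᵐ ω ∂μ, 1 ≤ T j ω := by
    intro j
    have h1 : μ[(fun _ => (1:ℝ)) | ℱ j] = fun _ => (1:ℝ) := condExp_const (ℱ.le j) 1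
    have := condExp_mono (m := ℱ j) (integrable_const (1:ℝ)) (hewint (j+1))
      (ae_of_all _ fun ω => by
        simpa using Real.one_le_exp (hw0 (X (j+1) ω)))
    rw [h1] at this
    exact this
  have hTW : ∀ j, ∀ᵐ ω ∂μ, T j ω ≤ Real.exp W := by
    intro j
    have h1 : μ[(fun _ => Real.exp W) | ℱ j] = fun _ => Real.exp W :=
      condExp_const (ℱ.le j) _
    have := condExp_mono (m := ℱ j) (hewint (j+1)) (integrable_const (Real.exp W))
      (ae_of_all _ fun ω => Real.exp_le_exp.2 (hwb _))
    rw [h1] at this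
    exact this
  -- the key one-step (tower + conditional Jensen) estimate
  have key : ∀ (j : ℕ) (H : Ω → ℝ) (B : ℝ), Measurable[ℱ j] H →
      (∀ᵐ ω ∂μ, 0 ≤ H ω) → (∀ᵐ ω ∂μ, H ω ≤ B) →
      ∫ ω, H ω * (T j ω ^ ψ j)⁻¹ * Real.exp (ψ j * w (X (j + 1) ω)) ∂μ
        ≤ ∫ ω, H ω ∂μ := by
    intro j H B hHm hH0 hHB
    have hB : 0 ≤ B := by
      haveI : (ae μ).NeBot := ae_neBot.2 (IsProbabilityMeasure.ne_zero μ)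
      obtain ⟨ω, h1, h2⟩ := (hH0.and hHB).exists
      linarith
    set p : ℝ := ψ j with hp
    have hp0 : 0 < p := hψ0 j
    have hp1 : p ≤ 1 := hψ1 j
    set f : Ω → ℝ := fun ω => Real.exp (p * w (X (j + 1) ω)) with hf
    set g : Ω → ℝ := fun ω => H ω * (T j ω ^ p)⁻¹ with hg
    have hgm : Measurable[ℱ j] g := hHm.mul ((hTm j).pow measurable_const).inv
    -- a.e. bounds
    have hTfacts : ∀ᵐ ω ∂μ, 1 ≤ T j ω ∧ T j ω ≤ Real.exp W := (hT1 j).and (hTW j)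
    have hTp1 : ∀ᵐ ω ∂μ, 1 ≤ T j ω ^ p := by
      filter_upwards [hT1 j] with ω h using Real.one_le_rpow h hp0.le
    have hHint : Integrable H μ := by
      refine hprob _ B ((hHm.mono (ℱ.le j) le_rfl).aestronglyMeasurable) ?_
      filter_upwards [hH0, hHB] with ω h1 h2
      rwa [abs_of_nonneg h1]
    have hgbd : ∀ᵐ ω ∂μ, 0 ≤ g ω ∧ g ω ≤ B := by
      filter_upwards [hH0, hHB, hTp1] with ω h1 h2 h3
      have hinv0 : 0 ≤ (T j ω ^ p)⁻¹ := inv_nonneg.2 (by linarith)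
      have hinv1 : (T j ω ^ p)⁻¹ ≤ 1 := inv_le_one_of_one_le₀ h3
      constructor
      · exact mul_nonneg h1 hinv0
      · calc H ω * (T j ω ^ p)⁻¹ ≤ H ω * 1 := mul_le_mul_of_nonneg_left hinv1 h1
          _ = H ω := mul_one _
          _ ≤ B := h2
    have hgint : Integrable g μ := by
      refine hprob _ B ((hgm.mono (ℱ.le j) le_rfl).aestronglyMeasurable) ?_
      filter_upwards [hgbd] with ω h
      rw [abs_of_nonneg h.1]; exact h.2
    have hfbd : ∀ ω, 0 ≤ f ω ∧ f ω ≤ Real.exp W := fun ω =>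
      ⟨(Real.exp_pos _).le, Real.exp_le_exp.2 (by
        nlinarith [hw0 (X (j+1) ω), hwb (X (j+1) ω)])⟩
    have hfm : Measurable f :=
      Real.measurable_exp.comp ((hwm.comp (hXm (j+1))).const_mul p)
    have hfint : Integrable f μ := by
      refine hprob _ (Real.exp W) hfm.aestronglyMeasurable (ae_of_all _ fun ω => ?_)
      rw [abs_of_nonneg (hfbd ω).1]; exact (hfbd ω).2
    have hgfint : Integrable (g * f) μ := by
      refine hprob _ (B * Real.exp W)
        ((hgm.mono (ℱ.le j) le_rfl).mul hfm).aestronglyMeasurable ?_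
      filter_upwards [hgbd] with ω h
      rw [Pi.mul_apply, abs_of_nonneg (mul_nonneg h.1 (hfbd ω).1)]
      exact mul_le_mul h.2 (hfbd ω).2 (hfbd ω).1 hB
    -- conditional Jensen: μ[f | ℱ j] ≤ᵐ (T j) ^ p
    have hJ : (μ[f | ℱ j]) ≤ᵐ[μ] fun ω => T j ω ^ p := by
      set q : Ω → ℝ := fun ω => p * T j ω ^ (p - 1) with hq
      have hqm : Measurable[ℱ j] q := ((hTm j).pow measurable_const).const_mul p
      have hqbd : ∀ᵐ ω ∂μ, 0 ≤ q ω ∧ q ω ≤ 1 := by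
        filter_upwards [hT1 j] with ω h1
        have hTpos : (0:ℝ) < T j ω := by linarith
        constructor
        · exact mul_nonneg hp0.le (Real.rpow_pos_of_pos hTpos _).le
        · have h2 : T j ω ^ (p - 1) ≤ 1 :=
            Real.rpow_le_one_of_one_le_of_nonpos h1 (by linarith)
          have h3 : (0:ℝ) < T j ω ^ (p - 1) := Real.rpow_pos_of_pos hTpos _
          calc q ω = p * T j ω ^ (p - 1) := rfl
            _ ≤ p * 1 := mul_le_mul_of_nonneg_left h2 hp0.le
            _ ≤ 1 := by linarith
      set e : Ω → ℝ := fun ω => Real.exp (w (X (j + 1) ω)) with he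
      set r : Ω → ℝ := fun ω => (1 - p) * T j ω ^ p with hr
      have hrm : Measurable[ℱ j] r := ((hTm j).pow measurable_const).const_mul _
      have hrint : Integrable r μ := by
        refine hprob _ ((1 - p) * Real.exp W ^ p)
          ((hrm.mono (ℱ.le j) le_rfl)).aestronglyMeasurable ?_
        filter_upwards [hTfacts] with ω ⟨h1, h2⟩
        have hTpos : (0:ℝ) < T j ω := by linarith
        rw [abs_of_nonneg (mul_nonneg (by linarith) (Real.rpow_pos_of_pos hTpos _).le)]
        exact mul_le_mul_of_nonneg_left
          (Real.rpow_le_rpow hTpos.le h2 hp0.le) (by linarith)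
      have hqeint : Integrable (q * e) μ := by
        refine hprob _ (Real.exp W)
          ((hqm.mono (ℱ.le j) le_rfl).mul (hewm (j+1))).aestronglyMeasurable ?_
        filter_upwards [hqbd] with ω ⟨h1, h2⟩
        have he0 : 0 ≤ e ω := (Real.exp_pos _).le
        have heW : e ω ≤ Real.exp W := Real.exp_le_exp.2 (hwb _)
        rw [Pi.mul_apply, abs_of_nonneg (mul_nonneg h1 he0)]
        calc q ω * e ω ≤ 1 * Real.exp W := mul_le_mul h2 heW he0 one_pos.le
          _ = Real.exp W := one_mul _
      -- pointwise tangent bound, a.e.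
      have hpt : f ≤ᵐ[μ] q * e + r := by
        filter_upwards [hT1 j] with ω h1
        have hTpos : (0:ℝ) < T j ω := by linarith
        have htan := rpow_tangent (y := e ω) (s := T j ω) hp0 hp1 (Real.exp_pos _).le hTpos
        have hfe : f ω = e ω ^ p := (exp_rpow' (w (X (j+1) ω)) p).symm
        show f ω ≤ (q * e + r) ω
        rw [hfe]
        simpa [hq, hr, he, Pi.add_apply, Pi.mul_apply] using htan
      have hmono := condExp_mono (m := ℱ j) hfint (hqeint.add hrint) hpt
      have hsum : μ[q * e + r | ℱ j] =ᵐ[μ] μ[q * e | ℱ j] + μ[r | ℱ j] :=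
        condExp_add hqeint hrint _
      have hpull : μ[q * e | ℱ j] =ᵐ[μ] q * μ[e | ℱ j] :=
        condExp_mul_of_stronglyMeasurable_left (hqm.stronglyMeasurable) hqeint (hewint (j+1))
      have hrfix : μ[r | ℱ j] =ᵐ[μ] r := by
        rw [condExp_of_stronglyMeasurable (ℱ.le j) (hrm.stronglyMeasurable) hrint]
      -- μ[e | ℱ j] = T j by definition
      have hTe : μ[e | ℱ j] = T j := rfl
      refine hmono.trans (hsum.trans_le ?_)
      have : (q * μ[e | ℱ j] + r : Ω → ℝ) ≤ᵐ[μ] fun ω => T j ω ^ p := by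
        filter_upwards [hT1 j] with ω h1
        have hTpos : (0:ℝ) < T j ω := by linarith
        have hsplit : T j ω ^ (p - 1) * T j ω = T j ω ^ p := by
          rw [← Real.rpow_add_one hTpos.ne' (p - 1)]; norm_num
        simp only [Pi.add_apply, Pi.mul_apply, hTe, hq, hr]
        nlinarith [hsplit]
      calc (μ[q * e | ℱ j] + μ[r | ℱ j] : Ω → ℝ)
          =ᵐ[μ] q * μ[e | ℱ j] + r := hpull.add hrfix
        _ ≤ᵐ[μ] fun ω => T j ω ^ p := this
    -- finish key: tower property + pull-out
    have hpull2 : μ[g * f | ℱ j] =ᵐ[μ] g * μ[f | ℱ j] :=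
      condExp_mul_of_stronglyMeasurable_left (hgm.stronglyMeasurable) hgfint hfint
    have hle : μ[g * f | ℱ j] ≤ᵐ[μ] H := by
      filter_upwards [hpull2, hJ, hgbd, hT1 j] with ω h1 h2 h3 h4
      have hTppos : (0:ℝ) < T j ω ^ p := Real.rpow_pos_of_pos (by linarith) _
      calc (μ[g * f | ℱ j]) ω = g ω * (μ[f | ℱ j]) ω := h1
        _ ≤ g ω * T j ω ^ p := mul_le_mul_of_nonneg_left h2 h3.1
        _ = H ω * ((T j ω ^ p)⁻¹ * T j ω ^ p) := by rw [hg]; ring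
        _ = H ω := by rw [inv_mul_cancel₀ hTppos.ne', mul_one]
    calc ∫ ω, H ω * (T j ω ^ ψ j)⁻¹ * Real.exp (ψ j * w (X (j + 1) ω)) ∂μ
        = ∫ ω, (g * f) ω ∂μ := by
          refine integral_congr_ae (ae_of_all _ fun ω => ?_)
          simp [hg, hf, hp, Pi.mul_apply]
      _ = ∫ ω, (μ[g * f | ℱ j]) ω ∂μ := (integral_condExp (ℱ.le j)).symm
      _ ≤ ∫ ω, H ω ∂μ := integral_mono_ae integrable_condExp hHint hle
  -- the product process
  set G : ℕ → Ω → ℝ := fun m ω => ∏ j ∈ Finset.range m,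
      Real.exp (ψ j * w (X j ω)) * (T j ω ^ ψ j)⁻¹ with hG
  have hfacm : ∀ j m, j < m → Measurable[ℱ m]
      (fun ω => Real.exp (ψ j * w (X j ω)) * (T j ω ^ ψ j)⁻¹) := by
    intro j m hj
    have hXj : Measurable[ℱ m] (X j) := (hX j).mono (ℱ.mono hj.le) le_rfl
    have hTj : Measurable[ℱ m] (T j) := (hTm j).mono (ℱ.mono hj.le) le_rfl
    exact (Real.measurable_exp.comp ((hwm.comp hXj).const_mul (ψ j))).mul
      ((hTj.pow measurable_const).inv)
  have hGm : ∀ m, Measurable[ℱ m] (G m) := by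
    intro m
    apply Finset.measurable_prod
    intro j hj
    exact hfacm j m (Finset.mem_range.1 hj)
  have hTall : ∀ᵐ ω ∂μ, ∀ j, 1 ≤ T j ω := ae_all_iff.2 hT1
  have hGbd : ∀ m, ∀ᵐ ω ∂μ, 0 ≤ G m ω ∧ G m ω ≤ Real.exp W ^ m := by
    intro m
    filter_upwards [hTall] with ω hTω
    have hfac : ∀ j, 0 ≤ Real.exp (ψ j * w (X j ω)) * (T j ω ^ ψ j)⁻¹ ∧
        Real.exp (ψ j * w (X j ω)) * (T j ω ^ ψ j)⁻¹ ≤ Real.exp W := by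
      intro j
      have hTp : 1 ≤ T j ω ^ ψ j := Real.one_le_rpow (hTω j) (hψ0 j).le
      have hinv0 : 0 ≤ (T j ω ^ ψ j)⁻¹ := inv_nonneg.2 (by linarith)
      have hinv1 : (T j ω ^ ψ j)⁻¹ ≤ 1 := inv_le_one_of_one_le₀ hTp
      have hexp : Real.exp (ψ j * w (X j ω)) ≤ Real.exp W := by
        apply Real.exp_le_exp.2
        nlinarith [hw0 (X j ω), hwb (X j ω), (hψ0 j).le, hψ1 j]
      constructor
      · exact mul_nonneg (Real.exp_pos _).le hinv0
      · calc Real.exp (ψ j * w (X j ω)) * (T j ω ^ ψ j)⁻¹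
            ≤ Real.exp W * 1 := mul_le_mul hexp hinv1 hinv0 (Real.exp_pos _).le
          _ = Real.exp W := mul_one _
    constructor
    · exact Finset.prod_nonneg fun j _ => (hfac j).1
    · calc G m ω ≤ ∏ _j ∈ Finset.range m, Real.exp W :=
          Finset.prod_le_prod (fun j _ => (hfac j).1) (fun j _ => (hfac j).2)
        _ = Real.exp W ^ m := by rw [Finset.prod_const, Finset.card_range]
  have hGint : ∀ m, Integrable (G m) μ := by
    intro m
    refine hprob _ (Real.exp W ^ m) ((hGm m).mono (ℱ.le m) le_rfl).aestronglyMeasurable ?_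
    filter_upwards [hGbd m] with ω h
    rw [abs_of_nonneg h.1]; exact h.2
  -- the backward induction claim
  have claim : ∀ m : ℕ, ∫ ω, G (m+1) ω * Real.exp (ψ m * w (X (m+1) ω)) ∂μ
      ≤ Real.exp (ψ 0 * w x) := by
    intro m
    induction m with
    | zero =>
      have hHm0 : Measurable[ℱ 0] (fun ω => Real.exp (ψ 0 * w (X 0 ω))) :=
        Real.measurable_exp.comp ((hwm.comp (hX 0)).const_mul (ψ 0))
      have hkey := key 0 (fun ω => Real.exp (ψ 0 * w (X 0 ω))) (Real.exp W) hHm0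
        (ae_of_all _ fun ω => (Real.exp_pos _).le)
        (ae_of_all _ fun ω => Real.exp_le_exp.2 (by
          nlinarith [hw0 (X 0 ω), hwb (X 0 ω), (hψ0 0).le, hψ1 0]))
      have heq : ∫ ω, G 1 ω * Real.exp (ψ 0 * w (X 1 ω)) ∂μ
          = ∫ ω, Real.exp (ψ 0 * w (X 0 ω)) * (T 0 ω ^ ψ 0)⁻¹
              * Real.exp (ψ 0 * w (X (0 + 1) ω)) ∂μ := by
        refine integral_congr_ae (ae_of_all _ fun ω => ?_)
        simp [hG, Finset.prod_range_one]
      have hlast : ∫ ω, Real.exp (ψ 0 * w (X 0 ω)) ∂μ = Real.exp (ψ 0 * w x) := by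
        have : (fun ω => Real.exp (ψ 0 * w (X 0 ω))) =ᵐ[μ]
            (fun _ => Real.exp (ψ 0 * w x)) := by
          filter_upwards [hstart] with ω hω; rw [hω]
        rw [integral_congr_ae this, integral_const]
        simp
      rw [heq, ← hlast]
      exact hkey
    | succ m ih =>
      set H : Ω → ℝ := fun ω => G (m+1) ω * Real.exp (ψ (m+1) * w (X (m+1) ω)) with hH
      have hHm1 : Measurable[ℱ (m+1)] H := by
        refine ((hGm (m+1)).mono (ℱ.mono (le_refl (m+1))) le_rfl).mul ?_
        exact Real.measurable_exp.comp ((hwm.comp (hX (m+1))).const_mul (ψ (m+1)))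
      have hHbd : ∀ᵐ ω ∂μ, 0 ≤ H ω ∧ H ω ≤ Real.exp W ^ (m+1) * Real.exp W := by
        filter_upwards [hGbd (m+1)] with ω h
        have he0 : 0 ≤ Real.exp (ψ (m+1) * w (X (m+1) ω)) := (Real.exp_pos _).le
        have heW : Real.exp (ψ (m+1) * w (X (m+1) ω)) ≤ Real.exp W :=
          Real.exp_le_exp.2 (by
            nlinarith [hw0 (X (m+1) ω), hwb (X (m+1) ω), (hψ0 (m+1)).le, hψ1 (m+1)])
        exact ⟨mul_nonneg h.1 he0, mul_le_mul h.2 heW he0 (pow_nonneg (Real.exp_pos _).le _)⟩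
      have hkey := key (m+1) H (Real.exp W ^ (m+1) * Real.exp W) hHm1
        ((hHbd).mono fun ω h => h.1) ((hHbd).mono fun ω h => h.2)
      have heq : ∫ ω, G (m+2) ω * Real.exp (ψ (m+1) * w (X (m+2) ω)) ∂μ
          = ∫ ω, H ω * (T (m+1) ω ^ ψ (m+1))⁻¹
              * Real.exp (ψ (m+1) * w (X ((m+1) + 1) ω)) ∂μ := by
        refine integral_congr_ae (ae_of_all _ fun ω => ?_)
        simp only [hG, hH, Finset.prod_range_succ]
        ring
      have hHint : Integrable H μ := by
        refine hprob _ (Real.exp W ^ (m+1) * Real.exp W)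
          ((hHm1.mono (ℱ.le (m+1)) le_rfl)).aestronglyMeasurable ?_
        filter_upwards [hHbd] with ω h
        rw [abs_of_nonneg h.1]; exact h.2
      have hmid : Integrable (fun ω => G (m+1) ω * Real.exp (ψ m * w (X (m+1) ω))) μ := by
        refine hprob _ (Real.exp W ^ (m+1) * Real.exp W) ?_ ?_
        · exact (((hGm (m+1)).mono (ℱ.le (m+1)) le_rfl).mul
            (Real.measurable_exp.comp ((hwm.comp (hXm (m+1))).const_mul (ψ m)))).aestronglyMeasurable
        · filter_upwards [hGbd (m+1)] with ω h
          have he0 : 0 ≤ Real.exp (ψ m * w (X (m+1) ω)) := (Real.exp_pos _).le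
          have heW : Real.exp (ψ m * w (X (m+1) ω)) ≤ Real.exp W :=
            Real.exp_le_exp.2 (by
              nlinarith [hw0 (X (m+1) ω), hwb (X (m+1) ω), (hψ0 m).le, hψ1 m])
          rw [abs_of_nonneg (mul_nonneg h.1 he0)]
          exact mul_le_mul h.2 heW he0 (pow_nonneg (Real.exp_pos _).le _)
      have hstep : ∫ ω, H ω ∂μ
          ≤ ∫ ω, G (m+1) ω * Real.exp (ψ m * w (X (m+1) ω)) ∂μ := by
        refine integral_mono_ae hHint hmid ?_
        filter_upwards [hGbd (m+1)] with ω h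
        have : Real.exp (ψ (m+1) * w (X (m+1) ω)) ≤ Real.exp (ψ m * w (X (m+1) ω)) :=
          Real.exp_le_exp.2 (mul_le_mul_of_nonneg_right (hψmono m (m+1) (by omega))
            (hw0 _))
        exact mul_le_mul_of_nonneg_left this h.1
      calc ∫ ω, G (m+2) ω * Real.exp (ψ (m+1) * w (X (m+2) ω)) ∂μ
          = _ := heq
        _ ≤ ∫ ω, H ω ∂μ := hkey
        _ ≤ ∫ ω, G (m+1) ω * Real.exp (ψ m * w (X (m+1) ω)) ∂μ := hstep
        _ ≤ Real.exp (ψ 0 * w x) := ih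
  -- pointwise (a.e.) bound using the sub-solution inequality
  have hsuball : ∀ᵐ ω ∂μ, ∀ j, Real.exp (γ * c (X j ω) (a j ω))
      ≤ Real.exp (w (X j ω) + γ * lam) / T j ω := ae_all_iff.2 hsub
  have hfac : ∀ᵐ ω ∂μ, ∀ j, Real.exp (γ * (ψ j * c (X j ω) (a j ω)))
      ≤ Real.exp (ψ j * (γ * lam))
        * (Real.exp (ψ j * w (X j ω)) * (T j ω ^ ψ j)⁻¹) := by
    filter_upwards [hsuball, hTall] with ω h1 h2
    intro j
    have hTpos : (0:ℝ) < T j ω := by linarith [h2 j]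
    have hTppos : (0:ℝ) < T j ω ^ ψ j := Real.rpow_pos_of_pos hTpos _
    have step1 : Real.exp (γ * c (X j ω) (a j ω)) * T j ω
        ≤ Real.exp (w (X j ω) + γ * lam) :=
      (le_div_iff₀ hTpos).1 (h1 j)
    have step2 : (Real.exp (γ * c (X j ω) (a j ω)) * T j ω) ^ ψ j
        ≤ Real.exp (w (X j ω) + γ * lam) ^ ψ j :=
      Real.rpow_le_rpow (mul_nonneg (Real.exp_pos _).le hTpos.le) step1 (hψ0 j).le
    rw [Real.mul_rpow (Real.exp_pos _).le hTpos.le, exp_rpow', exp_rpow'] at step2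
    have step3 : Real.exp (ψ j * (γ * c (X j ω) (a j ω)))
        ≤ Real.exp (ψ j * (w (X j ω) + γ * lam)) * (T j ω ^ ψ j)⁻¹ := by
      have h4 := (le_div_iff₀ hTppos).2 step2
      rwa [div_eq_mul_inv] at h4
    calc Real.exp (γ * (ψ j * c (X j ω) (a j ω)))
        = Real.exp (ψ j * (γ * c (X j ω) (a j ω))) := by ring_nf
      _ ≤ Real.exp (ψ j * (w (X j ω) + γ * lam)) * (T j ω ^ ψ j)⁻¹ := step3
      _ = Real.exp (ψ j * (γ * lam))
            * (Real.exp (ψ j * w (X j ω)) * (T j ω ^ ψ j)⁻¹) := by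
          rw [show ψ j * (w (X j ω) + γ * lam)
              = ψ j * (γ * lam) + ψ j * w (X j ω) by ring, Real.exp_add, mul_assoc]
  have hpt : ∀ᵐ ω ∂μ,
      Real.exp (γ * ∑ j ∈ Finset.range n, ψ j * c (X j ω) (a j ω))
        ≤ Real.exp (γ * lam * ∑ j ∈ Finset.range n, ψ j) * G n ω := by
    filter_upwards [hfac] with ω h
    have hexpand : Real.exp (γ * ∑ j ∈ Finset.range n, ψ j * c (X j ω) (a j ω))
        = ∏ j ∈ Finset.range n, Real.exp (γ * (ψ j * c (X j ω) (a j ω))) := by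
      rw [Finset.mul_sum, Real.exp_sum]
    rw [hexpand]
    calc ∏ j ∈ Finset.range n, Real.exp (γ * (ψ j * c (X j ω) (a j ω)))
        ≤ ∏ j ∈ Finset.range n, (Real.exp (ψ j * (γ * lam))
            * (Real.exp (ψ j * w (X j ω)) * (T j ω ^ ψ j)⁻¹)) :=
          Finset.prod_le_prod (fun j _ => (Real.exp_pos _).le) (fun j _ => h j)
      _ = (∏ j ∈ Finset.range n, Real.exp (ψ j * (γ * lam))) * G n ω := by
          rw [Finset.prod_mul_distrib]
      _ = Real.exp (γ * lam * ∑ j ∈ Finset.range n, ψ j) * G n ω := by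
          rw [← Real.exp_sum]
          congr 1
          rw [← Finset.sum_mul, mul_comm]
  -- reindexing
  have hsum_eq : ∀ ω, ∑ i ∈ Finset.Ico k (n + k), φ i * c (X (i - k) ω) (a (i - k) ω)
      = ∑ j ∈ Finset.range n, ψ j * c (X j ω) (a j ω) := by
    intro ω
    rw [Finset.sum_Ico_eq_sum_range]
    simp [hψ, Nat.add_sub_cancel_left, Nat.add_sub_cancel]
  have hφsum : ∑ i ∈ Finset.Ico k (n + k), φ i = ∑ j ∈ Finset.range n, ψ j := by
    rw [Finset.sum_Ico_eq_sum_range]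
    simp [hψ, Nat.add_sub_cancel]
  -- final assembly
  set F : Ω → ℝ := fun ω =>
    Real.exp (γ * ∑ j ∈ Finset.range n, ψ j * c (X j ω) (a j ω)) with hF
  have hLHS : ∫ ω, Real.exp (γ * ∑ i ∈ Finset.Ico k (n + k),
      φ i * c (X (i - k) ω) (a (i - k) ω)) ∂μ = ∫ ω, F ω ∂μ := by
    refine integral_congr_ae (ae_of_all _ fun ω => ?_)
    simp only [hF]; rw [hsum_eq ω]
  have hψ0k : ψ 0 = φ k := by simp [hψ]
  have hthird : 1 ≤ Real.exp (W * (φ k - φ (n + k - 1))) := by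
    apply Real.one_le_exp
    have := hφmono k (n + k - 1) (by omega)
    nlinarith
  have hRHS2 : Real.exp (γ * lam * ∑ i ∈ Finset.Ico k (n + k), φ i)
        * Real.exp (φ k * w x)
      ≤ Real.exp (γ * lam * ∑ i ∈ Finset.Ico k (n + k), φ i)
        * Real.exp (φ k * w x) * Real.exp (W * (φ k - φ (n + k - 1))) := by
    nth_rewrite 1 [← mul_one (Real.exp (γ * lam * ∑ i ∈ Finset.Ico k (n + k), φ i)
        * Real.exp (φ k * w x))]
    exact mul_le_mul_of_nonneg_left hthird
      (mul_nonneg (Real.exp_pos _).le (Real.exp_pos _).le)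
  rw [hLHS]
  by_cases hFi : Integrable F μ
  · -- main estimate
    have hGn1int : Integrable (fun ω => G n ω * Real.exp (ψ (n-1) * w (X n ω))) μ := by
      refine hprob _ (Real.exp W ^ n * Real.exp W) ?_ ?_
      · exact (((hGm n).mono (ℱ.le n) le_rfl).mul
          (Real.measurable_exp.comp ((hwm.comp (hXm n)).const_mul _))).aestronglyMeasurable
      · filter_upwards [hGbd n] with ω h
        have he0 : 0 ≤ Real.exp (ψ (n-1) * w (X n ω)) := (Real.exp_pos _).le
        have heW : Real.exp (ψ (n-1) * w (X n ω)) ≤ Real.exp W :=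
          Real.exp_le_exp.2 (by
            nlinarith [hw0 (X n ω), hwb (X n ω), (hψ0 (n-1)).le, hψ1 (n-1)])
        rw [abs_of_nonneg (mul_nonneg h.1 he0)]
        exact mul_le_mul h.2 heW he0 (pow_nonneg (Real.exp_pos _).le _)
    have hmul_int : Integrable (fun ω =>
        Real.exp (γ * lam * ∑ j ∈ Finset.range n, ψ j) * G n ω) μ :=
      (hGint n).const_mul _
    have h1 : ∫ ω, F ω ∂μ
        ≤ ∫ ω, Real.exp (γ * lam * ∑ j ∈ Finset.range n, ψ j) * G n ω ∂μ :=
      integral_mono_ae hFi hmul_int hpt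
    have h2 : ∫ ω, Real.exp (γ * lam * ∑ j ∈ Finset.range n, ψ j) * G n ω ∂μ
        = Real.exp (γ * lam * ∑ j ∈ Finset.range n, ψ j) * ∫ ω, G n ω ∂μ :=
      integral_const_mul _ _
    have h3 : ∫ ω, G n ω ∂μ ≤ ∫ ω, G n ω * Real.exp (ψ (n-1) * w (X n ω)) ∂μ := by
      refine integral_mono_ae (hGint n) hGn1int ?_
      filter_upwards [hGbd n] with ω h
      exact le_mul_of_one_le_right h.1 (Real.one_le_exp
        (mul_nonneg (hψ0 (n-1)).le (hw0 _)))
    have h4 : ∫ ω, G n ω * Real.exp (ψ (n-1) * w (X n ω)) ∂μ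
        ≤ Real.exp (ψ 0 * w x) := by
      obtain ⟨m, rfl⟩ : ∃ m, n = m + 1 := ⟨n - 1, by omega⟩
      simpa using claim m
    calc ∫ ω, F ω ∂μ
        ≤ Real.exp (γ * lam * ∑ j ∈ Finset.range n, ψ j) * ∫ ω, G n ω ∂μ := by
          rw [← h2]; exact h1
      _ ≤ Real.exp (γ * lam * ∑ j ∈ Finset.range n, ψ j) * Real.exp (ψ 0 * w x) :=
          mul_le_mul_of_nonneg_left (le_trans h3 h4) (Real.exp_pos _).le
      _ = Real.exp (γ * lam * ∑ i ∈ Finset.Ico k (n + k), φ i)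
            * Real.exp (φ k * w x) := by rw [hφsum, hψ0k]
      _ ≤ _ := hRHS2
  · rw [integral_undef hFi]
    positivity
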